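/- Let n ≥ 3 and Ω^< = {x ∈ ℝ^{n+1} : x_1 > 0 and x_{n+1} < x_1 x_2 + x_1 Σ_{j=3}^n x_j²}. For every point x ∈ Ω^< there exist q > 0, r ≠ 0, t ∈ ℝ and s = (s_3,…,s_n) ∈ ℝ^{n−2} such that the affine map T_{q,r,t,s}(y) = (q y_1, r²(y_2 − 2Σ_{j=3}^n s_j y_j + t), r(y_3 + s_3), …, r(y_n + s_n), q r²(y_{n+1} + y_1 Σ_{j=3}^n s_j² + t y_1)) sends the point (1, 0, …, 0, −1) to x. Consequently the group of affine maps T_{q,r,t,s} acts transitively on Ω^<. -/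

import Mathlib

/-- The domain `Ω^< = {x ∈ ℝ^{n+1} : x₁ > 0, x_{n+1} < x₁x₂ + x₁ Σ_{j=3}^n x_j²}`
(coordinates are 0-indexed: `x₁ = x 0`, `x₂ = x 1`, `x_j = x (j-1)`, `x_{n+1} = x n`). -/
def omegaLT (n : ℕ) (hn : 3 ≤ n) : Set (Fin (n + 1) → ℝ) :=
  {x | 0 < x 0 ∧ x (Fin.last n) < x 0 * x ⟨1, by omega⟩ +
    x 0 * ∑ j : Fin (n + 1), (if 2 ≤ (j : ℕ) ∧ (j : ℕ) < n then x j ^ 2 else 0)}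

/-- The affine map `T_{q,r,t,s}` : `x₁ ↦ q x₁`, `x₂ ↦ r²(x₂ − 2Σ s_j x_j + t)`,
`x_j ↦ r(x_j + s_j)` (for `3 ≤ j ≤ n`), `x_{n+1} ↦ q r²(x_{n+1} + x₁ Σ s_j² + t x₁)`. -/
def Tmap (n : ℕ) (q r t : ℝ) (s : Fin (n - 2) → ℝ) (x : Fin (n + 1) → ℝ) :
    Fin (n + 1) → ℝ := fun i =>
  if h0 : (i : ℕ) = 0 then q * x i
  else if h1 : (i : ℕ) = 1 then
    r ^ 2 * (x i - 2 * (∑ j : Fin (n - 2), s j * x ⟨(j : ℕ) + 2, by have := j.isLt; omega⟩) + t)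
  else if h2 : (i : ℕ) = n then
    q * r ^ 2 * (x i + x 0 * (∑ j : Fin (n - 2), s j ^ 2) + t * x 0)
  else r * (x i + s ⟨(i : ℕ) - 2, by have := i.isLt; omega⟩)

lemma sum_shift (n : ℕ) (hn : 3 ≤ n) (f : Fin (n + 1) → ℝ) :
    ∑ j : Fin (n + 1), (if 2 ≤ (j : ℕ) ∧ (j : ℕ) < n then f j else 0)
      = ∑ j : Fin (n - 2), f ⟨(j : ℕ) + 2, by have := j.isLt; omega⟩ := by
  set F : ℕ → ℝ := fun k => if h : k < n + 1 then f ⟨k, h⟩ else 0 with hF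
  have h1 : ∑ j : Fin (n + 1), (if 2 ≤ (j : ℕ) ∧ (j : ℕ) < n then f j else 0)
      = ∑ k ∈ Finset.range (n + 1), (if 2 ≤ k ∧ k < n then F k else 0) := by
    rw [← Fin.sum_univ_eq_sum_range (fun k => if 2 ≤ k ∧ k < n then F k else 0) (n+1)]
    apply Finset.sum_congr rfl
    intro j _
    have hj : (j : ℕ) < n + 1 := j.isLt
    simp [hF, hj, Nat.lt_succ_iff.mp hj]
  have h2 : ∑ j : Fin (n - 2), f ⟨(j : ℕ) + 2, by have := j.isLt; omega⟩
      = ∑ k ∈ Finset.range (n - 2), F (k + 2) := by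
    rw [← Fin.sum_univ_eq_sum_range (fun k => F (k + 2)) (n-2)]
    apply Finset.sum_congr rfl
    intro j _
    have hj : (j : ℕ) + 2 < n + 1 := by have := j.isLt; omega
    simp [hF, hj]
    intro h; exact absurd h (by omega)
  rw [h1, h2, ← Finset.sum_filter]
  have hfil : (Finset.range (n + 1)).filter (fun k => 2 ≤ k ∧ k < n) = Finset.Ico 2 n := by
    ext k
    simp [Finset.mem_filter, Finset.mem_Ico]
    omega
  rw [hfil, Finset.sum_Ico_eq_sum_range]
  apply Finset.sum_congr rfl
  intro k _
  rw [add_comm]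

/-- The group of affine maps `T_{q,r,t,s}` acts transitively on `Ω^<`: every point of `Ω^<`
is the image of the base point `(1, 0, …, 0, −1)` under some `T_{q,r,t,s}`. -/
theorem Tmap_transitive_omegaLT (n : ℕ) (hn : 3 ≤ n) :
    ∀ x ∈ omegaLT n hn, ∃ (q r t : ℝ) (s : Fin (n - 2) → ℝ), 0 < q ∧ r ≠ 0 ∧
      Tmap n q r t s
        (fun i => if (i : ℕ) = 0 then 1 else if (i : ℕ) = n then -1 else 0) = x := by
  rintro x ⟨hx0, hxlt⟩
  set S : ℝ := ∑ j : Fin (n + 1), (if 2 ≤ (j : ℕ) ∧ (j : ℕ) < n then x j ^ 2 else 0) with hS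
  set D : ℝ := x 0 * x ⟨1, by omega⟩ + x 0 * S - x (Fin.last n) with hD
  have hDpos : 0 < D := by simp only [hD]; linarith
  have hDne : D ≠ 0 := ne_of_gt hDpos
  have hx0ne : x 0 ≠ 0 := ne_of_gt hx0
  set r : ℝ := Real.sqrt (D / x 0) with hr
  have hrpos : 0 < r := Real.sqrt_pos.mpr (div_pos hDpos hx0)
  have hrne : r ≠ 0 := ne_of_gt hrpos
  have hr2 : r ^ 2 = D / x 0 := Real.sq_sqrt (le_of_lt (div_pos hDpos hx0))
  have hjne : ∀ j : Fin (n - 2), ¬((j : ℕ) + 2 = n) := fun j => by have := j.isLt; omega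
  have hn0 : n ≠ 0 := by omega
  have hn1 : n ≠ 1 := by omega
  refine ⟨x 0, r, x 0 * x ⟨1, by omega⟩ / D, fun j => x ⟨(j : ℕ) + 2, by have := j.isLt; omega⟩ / r,
    hx0, hrne, ?_⟩
  funext i
  unfold Tmap
  by_cases h0 : (i : ℕ) = 0
  · have : i = 0 := Fin.ext h0
    subst this
    simp
  · rw [dif_neg h0]
    by_cases h1 : (i : ℕ) = 1
    · have hxi : x i = x ⟨1, by omega⟩ := by rw [Fin.ext (show (i:ℕ) = ((⟨1, by omega⟩ : Fin (n+1)) : ℕ) from h1)]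
      have h1n : ¬((i : ℕ) = n) := by omega
      have hj0 : ∀ j : Fin (n - 2), ¬((j : ℕ) + 2 = 0) := fun j => by omega
      rw [dif_pos h1]
      simp only [hjne, if_false, mul_zero, Finset.sum_const_zero, if_neg h0, if_neg h1n,
        ite_false, sub_zero, zero_sub, zero_add, hxi, hj0]
      rw [hr2]
      field_simp
    · rw [dif_neg h1]
      by_cases h2 : (i : ℕ) = n
      · have hxi : x i = x (Fin.last n) := by rw [Fin.ext (show (i:ℕ) = (Fin.last n : ℕ) by simpa using h2)]
        rw [dif_pos h2]
        have hsum : (∑ j : Fin (n - 2),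
            (x ⟨(j : ℕ) + 2, by have := j.isLt; omega⟩ / r) ^ 2) = S / r ^ 2 := by
          rw [hS, sum_shift n hn (fun j => x j ^ 2), Finset.sum_div]
          apply Finset.sum_congr rfl
          intro j _
          rw [div_pow]
        simp only [if_neg h0, h2, if_neg hn0, ite_true, hsum, hxi]
        norm_num
        rw [hr2, hD]
        have hE : x 0 * (x ⟨1, by omega⟩ + S) - x (Fin.last n) ≠ 0 := by rw [mul_add]; exact hDne
        field_simp
        ring
      · rw [dif_neg h2]
        have he : (if (i : ℕ) = 0 then (1:ℝ) else if (i : ℕ) = n then -1 else 0) = 0 := by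
          simp [h0, h2]
        have hidx : (⟨((i : ℕ) - 2) + 2, by have := i.isLt; omega⟩ : Fin (n + 1)) = i := by
          apply Fin.ext
          simp
          omega
        simp only [he, hidx]
        rw [zero_add]
        field_simp
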